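/- Let Γ and Σ be finite graphs without isolated vertices. Then the strong product Γ ⊠ Σ is R-thin, i.e., distinct vertices of Γ ⊠ Σ always have distinct open neighbourhoods. -/

import Mathlib

def strongProd {V W : Type*} (G : SimpleGraph V) (H : SimpleGraph W) :
    SimpleGraph (V × W) where
  Adj p q := (p.1 = q.1 ∧ H.Adj p.2 q.2) ∨ (G.Adj p.1 q.1 ∧ H.Adj p.2 q.2) ∨
    (G.Adj p.1 q.1 ∧ p.2 = q.2)
  symm := by
    constructor
    rintro p q (⟨h1, h2⟩ | ⟨h1, h2⟩ | ⟨h1, h2⟩)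
    · exact Or.inl ⟨h1.symm, h2.symm⟩
    · exact Or.inr (Or.inl ⟨h1.symm, h2.symm⟩)
    · exact Or.inr (Or.inr ⟨h1.symm, h2.symm⟩)
  loopless := by
    constructor
    rintro p (⟨_, h2⟩ | ⟨h1, _⟩ | ⟨h1, _⟩)
    · exact H.ne_of_adj h2 rfl
    · exact G.ne_of_adj h1 rfl
    · exact G.ne_of_adj h1 rfl

def semiStrongProd {V W : Type*} (G : SimpleGraph V) (H : SimpleGraph W) :
    SimpleGraph (V × W) where
  Adj p q := (G.Adj p.1 q.1 ∨ p.1 = q.1) ∧ H.Adj p.2 q.2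
  symm := by
    constructor
    rintro p q ⟨h1 | h1, h2⟩
    · exact ⟨Or.inl h1.symm, h2.symm⟩
    · exact ⟨Or.inr h1.symm, h2.symm⟩
  loopless := by
    constructor
    rintro p ⟨_, h2⟩
    exact H.ne_of_adj h2 rfl

def lexProd {V W : Type*} (G : SimpleGraph V) (H : SimpleGraph W) :
    SimpleGraph (V × W) where
  Adj p q := G.Adj p.1 q.1 ∨ (p.1 = q.1 ∧ H.Adj p.2 q.2)
  symm := by
    constructor
    rintro p q (h | ⟨h1, h2⟩)
    · exact Or.inl h.symm
    · exact Or.inr ⟨h1.symm, h2.symm⟩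
  loopless := by
    constructor
    rintro p (h | ⟨_, h2⟩)
    · exact G.ne_of_adj h rfl
    · exact H.ne_of_adj h2 rfl

def directProd {V W : Type*} (G : SimpleGraph V) (H : SimpleGraph W) :
    SimpleGraph (V × W) where
  Adj p q := G.Adj p.1 q.1 ∧ H.Adj p.2 q.2
  symm := by
    constructor
    rintro p q ⟨h1, h2⟩
    exact ⟨h1.symm, h2.symm⟩
  loopless := by
    constructor
    rintro p ⟨h1, _⟩
    exact G.ne_of_adj h1 rfl

def RThin {V : Type*} (G : SimpleGraph V) : Prop :=
  ∀ u v : V, G.neighborSet u = G.neighborSet v → u = v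

theorem stmt5 {V W : Type*} [Fintype V] [Fintype W]
    (G : SimpleGraph V) (H : SimpleGraph W)
    (hG : ∀ v : V, ∃ u, G.Adj v u) (hH : ∀ x : W, ∃ y, H.Adj x y) :
    RThin (strongProd G H) := by
  rintro ⟨a, x⟩ ⟨b, y⟩ h
  have hAdj : ∀ p, (strongProd G H).Adj (a, x) p ↔ (strongProd G H).Adj (b, y) p := by
    intro p
    rw [← SimpleGraph.mem_neighborSet, ← SimpleGraph.mem_neighborSet, h]
  by_contra hne
  have hnadj : ¬ (strongProd G H).Adj (a, x) (b, y) := by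
    intro had
    exact (strongProd G H).loopless.irrefl _ ((hAdj _).mp had)
  have hiff : ∀ c z, ((a = c ∧ H.Adj x z) ∨ (G.Adj a c ∧ H.Adj x z) ∨ (G.Adj a c ∧ x = z))
      ↔ ((b = c ∧ H.Adj y z) ∨ (G.Adj b c ∧ H.Adj y z) ∨ (G.Adj b c ∧ y = z)) :=
    fun c z => hAdj (c, z)
  have hn : ¬ ((a = b ∧ H.Adj x y) ∨ (G.Adj a b ∧ H.Adj x y) ∨ (G.Adj a b ∧ x = y)) := hnadj
  push_neg at hn
  obtain ⟨hn1, hn2, hn3⟩ := hn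
  by_cases hab : a = b
  · subst hab
    have hxy : x ≠ y := fun hxy => hne (by rw [hxy])
    have hnH : ¬ H.Adj x y := hn1 rfl
    obtain ⟨u, hu⟩ := hG a
    have := (hiff u x).mp (Or.inr (Or.inr ⟨hu, rfl⟩))
    rcases this with ⟨_, h2⟩ | ⟨_, h2⟩ | ⟨_, h2⟩
    · exact hnH h2.symm
    · exact hnH h2.symm
    · exact hxy h2.symm
  · by_cases hGab : G.Adj a b
    · have := (hiff b x).mp (Or.inr (Or.inr ⟨hGab, rfl⟩))
      rcases this with ⟨_, h2⟩ | ⟨h1, _⟩ | ⟨h1, _⟩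
      · exact hn2 hGab h2.symm
      · exact G.loopless.irrefl b h1
      · exact G.loopless.irrefl b h1
    · obtain ⟨z, hz⟩ := hH x
      have := (hiff a z).mp (Or.inl ⟨rfl, hz⟩)
      rcases this with ⟨h1, _⟩ | ⟨h1, _⟩ | ⟨h1, _⟩
      · exact hab h1.symm
      · exact hGab h1.symm
      · exact hGab h1.symm
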